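/- Let ε₂ > 0, and for a fixed column j let c_i > 0 (i = 1,…,n), Δ̄_j > δ̲_j > 0, β̄_ij ≥ 0, and U_ij ≥ 0 be given. Define the modified rates β_ij = β̄_ij e^{−U_ij} and δ_j = (1 − e^{−U_jj}) Δ̄_j + e^{−U_jj} δ̲_j. If Σ_{i} (c_i β̄_ij / (c_j Δ̄_j)) e^{−U_ij} + ((Δ̄_j − δ̲_j)/Δ̄_j) e^{−U_jj} + ε₂ ≤ 1 (the exponential-cone constraint log(Σ_i exp(log(c_i β̄_ij/(c_j Δ̄_j)) − U_ij) + exp(log((Δ̄_j − δ̲_j)/Δ̄_j) − U_jj) + ε₂) ≤ 0), then the modified rates satisfy the strict stability inequality Σ_i c_i β_ij < c_j δ_j. -/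

import Mathlib

/-- the exponential-cone constraint
`Σ_i (c_i β̄_ij/(c_j Δ̄_j)) e^{−U_ij} + ((Δ̄_j − δ̲_j)/Δ̄_j) e^{−U_jj} + ε₂ ≤ 1`
implies the strict stability inequality `Σ_i c_i β_ij < c_j δ_j` for the modified
rates `β_ij = β̄_ij e^{−U_ij}` and `δ_j = (1 − e^{−U_jj}) Δ̄_j + e^{−U_jj} δ̲_j`. -/
theorem stmt13 {n : ℕ} (ε₂ : ℝ) (hε₂ : 0 < ε₂)
    (c : Fin n → ℝ) (hc : ∀ i, 0 < c i) (j : Fin n)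
    (Δbar δlow : ℝ) (hΔ : δlow < Δbar) (hδ : 0 < δlow)
    (βbar : Fin n → ℝ) (hβ : ∀ i, 0 ≤ βbar i)
    (U : Fin n → ℝ) (hU : ∀ i, 0 ≤ U i)
    (hcone : ∑ i, (c i * βbar i / (c j * Δbar)) * Real.exp (-U i)
        + ((Δbar - δlow) / Δbar) * Real.exp (-U j) + ε₂ ≤ 1) :
    ∑ i, c i * (βbar i * Real.exp (-U i))
      < c j * ((1 - Real.exp (-U j)) * Δbar + Real.exp (-U j) * δlow) := by
  have hΔ0 : 0 < Δbar := hδ.trans hΔ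
  have hcj : 0 < c j * Δbar := mul_pos (hc j) hΔ0
  have h1 : ∑ i, (c i * βbar i / (c j * Δbar)) * Real.exp (-U i)
      + ((Δbar - δlow) / Δbar) * Real.exp (-U j) < 1 := by linarith
  have h2 := mul_lt_mul_of_pos_right h1 hcj
  have key : ∀ i, (c i * βbar i / (c j * Δbar)) * Real.exp (-U i) * (c j * Δbar)
      = c i * (βbar i * Real.exp (-U i)) := by
    intro i; rw [div_mul_eq_mul_div, div_mul_eq_mul_div, div_eq_iff hcj.ne']; ring
  rw [add_mul, Finset.sum_mul] at h2
  simp_rw [key] at h2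
  have h3 : ((Δbar - δlow) / Δbar) * Real.exp (-U j) * (c j * Δbar)
      = c j * ((Δbar - δlow) * Real.exp (-U j)) := by
    field_simp
  rw [h3, one_mul] at h2
  nlinarith [h2]
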